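/- Let R be a commutative Noetherian ring of prime characteristic p > 0, let I be an ideal of R, and let 1 ≤ t < s be real numbers. Then the weak s-closure of the weak t-closure of I equals the weak t-closure of I. -/

import Mathlib

open Pointwise

/-- `R°`: the set of elements of `R` not contained in any minimal prime of `R`. -/
def RCirc (R : Type*) [CommRing R] : Set R :=
  {c | ∀ P ∈ minimalPrimes R, c ∉ P}

/-- The `q`-th Frobenius power `I^[q]` of an ideal `I`, generated by `q`-th powers
of elements of `I`. -/
def frobPow {R : Type*} [CommRing R] (I : Ideal R) (q : ℕ) : Ideal R :=
  Ideal.span ((fun f => f ^ q) '' (I : Set R))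

/-- The `(s,q)` mixed power `I^(s,q) = I^⌈sq⌉ + I^[q]`. -/
noncomputable def mixedPow {R : Type*} [CommRing R] (I : Ideal R) (s : ℝ) (q : ℕ) : Ideal R :=
  I ^ ⌈s * (q : ℝ)⌉₊ + frobPow I q

/-- The weak `s`-closure of `I`: elements `x` such that there is `c ∈ R°` with
`c·x^q ∈ I^(s,q)` for all sufficiently large powers `q = p^e` of `p`. -/
def weakCl {R : Type*} [CommRing R] (p : ℕ) (I : Ideal R) (s : ℝ) : Set R :=
  {x | ∃ c ∈ RCirc R, ∃ N : ℕ, ∀ e : ℕ, N ≤ e → c * x ^ p ^ e ∈ mixedPow I s (p ^ e)}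

/-- The tight closure `I*` of `I`. -/
def tightCl {R : Type*} [CommRing R] (p : ℕ) (I : Ideal R) : Set R :=
  {x | ∃ c ∈ RCirc R, ∃ N : ℕ, ∀ e : ℕ, N ≤ e → c * x ^ p ^ e ∈ frobPow I (p ^ e)}

/-- The integral closure of `I`: elements `x` such that there is `c ∈ R°` with
`c·x^n ∈ I^n` for all sufficiently large `n`. -/
def intCl {R : Type*} [CommRing R] (I : Ideal R) : Set R :=
  {x | ∃ c ∈ RCirc R, ∃ N : ℕ, ∀ n : ℕ, N ≤ n → c * x ^ n ∈ I ^ n}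

/-- The `α`-th rational power `I_α` of `I`, for rational `α = a/b ≥ 0`:
elements `x` with `x^b` in the integral closure of `I^a`. -/
noncomputable def ratPow {R : Type*} [CommRing R] (I : Ideal R) (α : ℚ) : Set R :=
  {x | x ^ α.den ∈ intCl (I ^ α.num.toNat)}

/-- `μ(I)`: the minimal number of generators of `I`. -/
noncomputable def mu {R : Type*} [CommRing R] (I : Ideal R) : ℕ :=
  sInf {m : ℕ | ∃ s : Finset R, s.card = m ∧ Ideal.span (s : Set R) = I}

/-- An ideal has positive height if it is not contained in any minimal prime. -/
def PosHeight {R : Type*} [CommRing R] (I : Ideal R) : Prop :=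
  ∀ P ∈ minimalPrimes R, ¬ I ≤ P

set_option maxHeartbeats 1000000

namespace Stmt12Aux

open Polynomial

variable {R : Type*} [CommRing R]

/-- auxiliary: the ideal of "integral relation tails" of degree `d` for `y` over `I`. -/
noncomputable def Gd (I : Ideal R) (y : R) (d : ℕ) : Ideal R :=
  ∑ j ∈ Finset.Icc 1 d, I ^ j * Ideal.span {y ^ (d - j)}

lemma sum_ideal_le {ι : Type*} {F : Finset ι} {f : ι → Ideal R} {C : Ideal R}
    (h : ∀ i ∈ F, f i ≤ C) : ∑ i ∈ F, f i ≤ C := by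
  classical
  induction F using Finset.induction with
  | empty => simp
  | insert _ _ ha ih =>
    rw [Finset.sum_insert ha]
    rw [Submodule.add_eq_sup]
    exact sup_le (h _ (Finset.mem_insert_self _ _))
      (ih fun i hi => h i (Finset.mem_insert_of_mem hi))

lemma le_sum_ideal {ι : Type*} {F : Finset ι} {f : ι → Ideal R} {i : ι} (hi : i ∈ F) :
    f i ≤ ∑ j ∈ F, f j := by
  classical
  exact Finset.single_le_sum (f := f) (fun j _ => bot_le) hi

lemma pow_mono {I K : Ideal R} (h : I ≤ K) (n : ℕ) : I ^ n ≤ K ^ n := by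
  induction n with
  | zero => simp
  | succ n ih => rw [pow_succ, pow_succ]; exact Ideal.mul_mono ih h

lemma Gd_mono {I K : Ideal R} (h : I ≤ K) (y : R) (d : ℕ) : Gd I y d ≤ Gd K y d := by
  apply sum_ideal_le
  intro j hj
  exact le_trans (Ideal.mul_mono (pow_mono h j) le_rfl)
    (le_sum_ideal (f := fun j => K ^ j * Ideal.span {y ^ (d - j)}) hj)

lemma Gd_mul_pow_le (I : Ideal R) (y : R) (d k : ℕ) :
    Gd I y d * Ideal.span {y ^ k} ≤ Gd I y (d + k) := by
  rw [Gd, Finset.sum_mul]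
  apply sum_ideal_le
  intro j hj
  rw [Finset.mem_Icc] at hj
  rw [mul_assoc, Ideal.span_singleton_mul_span_singleton, ← pow_add]
  have h1 : d - j + k = d + k - j := by omega
  rw [h1]
  refine le_trans ?_ (le_sum_ideal (f := fun j => I ^ j * Ideal.span {y ^ (d + k - j)})
    (Finset.mem_Icc.mpr ⟨hj.1, by omega⟩))
  exact le_rfl

lemma Gd_mul_Gd_le (I : Ideal R) (y : R) (d₁ d₂ : ℕ) :
    Gd I y d₁ * Gd I y d₂ ≤ Gd I y (d₁ + d₂) := by
  rw [Gd, Finset.sum_mul]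
  apply sum_ideal_le
  intro j hj
  rw [Finset.mem_Icc] at hj
  rw [Gd, Finset.mul_sum]
  apply sum_ideal_le
  intro j' hj'
  rw [Finset.mem_Icc] at hj'
  rw [mul_mul_mul_comm, ← pow_add, Ideal.span_singleton_mul_span_singleton, ← pow_add]
  have h1 : d₁ - j + (d₂ - j') = d₁ + d₂ - (j + j') := by omega
  rw [h1]
  exact le_sum_ideal (f := fun j => I ^ j * Ideal.span {y ^ (d₁ + d₂ - j)})
    (Finset.mem_Icc.mpr ⟨by omega, by omega⟩)

/-- "shape" of products of integral relations. -/
def Shape (I : Ideal R) (y : R) (z : R) : Prop :=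
  ∃ d u, u ∈ Gd I y d ∧ z = y ^ d - u

lemma Shape.one (I : Ideal R) (y : R) : Shape I y 1 :=
  ⟨0, 0, Ideal.zero_mem _, by simp⟩

lemma Shape.mul {I : Ideal R} {y z₁ z₂ : R} (h₁ : Shape I y z₁) (h₂ : Shape I y z₂) :
    Shape I y (z₁ * z₂) := by
  obtain ⟨d₁, u₁, hu₁, rfl⟩ := h₁
  obtain ⟨d₂, u₂, hu₂, rfl⟩ := h₂
  refine ⟨d₁ + d₂, u₁ * y ^ d₂ + y ^ d₁ * u₂ - u₁ * u₂, ?_, by ring⟩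
  refine Ideal.sub_mem _ (Ideal.add_mem _ ?_ ?_) ?_
  · exact Gd_mul_pow_le I y d₁ d₂ (Ideal.mul_mem_mul hu₁ (Ideal.subset_span rfl))
  · rw [mul_comm]
    have := Gd_mul_pow_le I y d₂ d₁ (Ideal.mul_mem_mul hu₂ (Ideal.subset_span rfl))
    rwa [add_comm d₂ d₁] at this
  · exact Gd_mul_Gd_le I y d₁ d₂ (Ideal.mul_mem_mul hu₁ hu₂)

lemma Shape.pow {I : Ideal R} {y z : R} (h : Shape I y z) (m : ℕ) : Shape I y (z ^ m) := by
  induction m with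
  | zero => simpa using Shape.one I y
  | succ m ih => rw [pow_succ]; exact ih.mul h

lemma pow_sup_le_step {I : Ideal R} {y : R} :
    ∀ m : ℕ, (I ⊔ Ideal.span {y}) ^ (m + 1) ≤ I * (I ⊔ Ideal.span {y}) ^ m + Ideal.span {y ^ (m + 1)} := by
  intro m
  induction m with
  | zero =>
    rw [zero_add, pow_one, pow_zero, mul_one, pow_one, Submodule.add_eq_sup]
  | succ m ih =>
    set L := I ⊔ Ideal.span {y} with hL
    have : L ^ (m + 2) = L ^ (m + 1) * L := by rw [← pow_succ]
    rw [this]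
    calc L ^ (m + 1) * L ≤ (I * L ^ m + Ideal.span {y ^ (m + 1)}) * L :=
          Ideal.mul_mono ih le_rfl
      _ = I * L ^ m * L + Ideal.span {y ^ (m + 1)} * L := by rw [add_mul]
      _ ≤ I * L ^ (m + 1) + Ideal.span {y ^ (m + 2)} := by
          rw [Submodule.add_eq_sup, Submodule.add_eq_sup]
          refine sup_le ?_ ?_
          · refine le_trans ?_ le_sup_left
            rw [mul_assoc, ← pow_succ]
          · show Ideal.span {y ^ (m + 1)} * L ≤ _
            rw [hL, Ideal.mul_sup]
            refine sup_le ?_ ?_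
            · rw [mul_comm]
              refine le_trans (Ideal.mul_mono le_rfl ?_) le_sup_left
              rw [← Ideal.span_singleton_pow]
              exact pow_mono le_sup_right (m + 1)
            · rw [Ideal.span_singleton_mul_span_singleton, ← pow_succ]
              exact le_sup_right

lemma Gd_le_mul (I : Ideal R) (y : R) (d : ℕ) :
    Gd I y d ≤ I * (I ⊔ Ideal.span {y}) ^ (d - 1) := by
  apply sum_ideal_le
  intro j hj
  rw [Finset.mem_Icc] at hj
  set L := I ⊔ Ideal.span {y}
  have h1 : I ^ j * Ideal.span {y ^ (d - j)} = I * (I ^ (j - 1) * Ideal.span {y ^ (d - j)}) := by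
    rw [← mul_assoc, ← pow_succ']
    congr 2
    omega
  rw [h1]
  refine Ideal.mul_mono le_rfl ?_
  have h2 : I ^ (j - 1) * Ideal.span {y ^ (d - j)} ≤ L ^ (j - 1) * L ^ (d - j) := by
    refine Ideal.mul_mono (pow_mono le_sup_left _) ?_
    rw [← Ideal.span_singleton_pow]
    exact pow_mono le_sup_right _
  refine h2.trans ?_
  rw [← pow_add]
  have : j - 1 + (d - j) = d - 1 := by omega
  rw [this]

lemma pow_le_of_rel {I : Ideal R} {y : R} {d : ℕ} (hd : 1 ≤ d) (hy : y ^ d ∈ Gd I y d) :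
    ∀ k, (I ⊔ Ideal.span {y}) ^ (d - 1 + k) ≤ I ^ k := by
  set L := I ⊔ Ideal.span {y} with hL
  have key : L ^ d ≤ I * L ^ (d - 1) := by
    have h1 : d = d - 1 + 1 := by omega
    calc L ^ d = L ^ (d - 1 + 1) := by rw [← h1]
      _ ≤ I * L ^ (d - 1) + Ideal.span {y ^ (d - 1 + 1)} := pow_sup_le_step _
      _ ≤ I * L ^ (d - 1) := by
          rw [Submodule.add_eq_sup]
          refine sup_le le_rfl ?_
          rw [← h1]
          refine (Ideal.span_le.mpr ?_).trans (Gd_le_mul I y d)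
          rintro z rfl
          exact hy
  have main : ∀ k, L ^ (d - 1 + k) ≤ I ^ k * L ^ (d - 1) := by
    intro k
    induction k with
    | zero => simp
    | succ k ih =>
      have : L ^ (d - 1 + (k + 1)) = L ^ (d - 1 + k) * L := by rw [← pow_succ]; ring_nf
      rw [this]
      calc L ^ (d - 1 + k) * L ≤ I ^ k * L ^ (d - 1) * L := Ideal.mul_mono ih le_rfl
        _ = I ^ k * L ^ (d - 1 + 1) := by rw [mul_assoc, ← pow_succ]
        _ = I ^ k * L ^ d := by congr 2; omega
        _ ≤ I ^ k * (I * L ^ (d - 1)) := Ideal.mul_mono le_rfl key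
        _ = I ^ (k + 1) * L ^ (d - 1) := by rw [← mul_assoc, ← pow_succ]
  intro k
  refine (main k).trans (le_trans (Ideal.mul_mono le_rfl le_top) ?_)
  rw [Ideal.mul_top]

lemma multi (I : Ideal R) (T : Finset R)
    (h : ∀ y ∈ T, ∃ d, 1 ≤ d ∧ y ^ d ∈ Gd I y d) :
    ∃ D : ℕ, ∀ k, (I ⊔ Ideal.span (T : Set R)) ^ (D + k) ≤ I ^ k := by
  classical
  induction T using Finset.induction with
  | empty =>
    refine ⟨0, fun k => ?_⟩
    simp
  | @insert a T ha ih =>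
    obtain ⟨D, hD⟩ := ih (fun y hy => h y (Finset.mem_insert_of_mem hy))
    obtain ⟨d, hd1, hd⟩ := h a (Finset.mem_insert_self _ _)
    set K := I ⊔ Ideal.span (T : Set R) with hK
    have heq : I ⊔ Ideal.span (↑(insert a T) : Set R) = K ⊔ Ideal.span {a} := by
      rw [Finset.coe_insert, Ideal.span_insert, hK]
      rw [sup_comm (Ideal.span {a}) (Ideal.span (T : Set R))]
      rw [← sup_assoc]
    refine ⟨d - 1 + D, fun k => ?_⟩
    rw [heq]
    have h1 : (K ⊔ Ideal.span {a}) ^ (d - 1 + (D + k)) ≤ K ^ (D + k) :=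
      pow_le_of_rel hd1 ((Gd_mono le_sup_left a d) hd) (D + k)
    have h2 : d - 1 + D + k = d - 1 + (D + k) := by omega
    rw [h2]
    exact h1.trans (hD k)

lemma domstar {D : Type*} [CommRing D] [IsDomain D] [IsNoetherianRing D]
    (I : Ideal D) (y c : D) (hc : c ≠ 0)
    (h : ∀ n : ℕ, ∃ m, n ≤ m ∧ c * y ^ m ∈ I ^ m) :
    ∃ d, 1 ≤ d ∧ y ^ d ∈ Gd I y d := by
  classical
  set A := reesAlgebra I with hA
  let gen : ℕ → Set A := fun k =>
    {a : A | ∃ q, q ≤ k ∧ c * y ^ q ∈ I ^ q ∧ (a : D[X]) = Polynomial.monomial q (c * y ^ q)}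
  let f : ℕ →o Ideal A :=
    ⟨fun k => Ideal.span (gen k), fun k l hkl =>
      Ideal.span_mono (fun a ⟨q, hq, h1, h2⟩ => ⟨q, hq.trans hkl, h1, h2⟩)⟩
  obtain ⟨n₀, hn₀⟩ := monotone_stabilizes_iff_noetherian.mpr
    (inferInstance : IsNoetherian A A) f
  obtain ⟨q', hq'1, hq'2⟩ := h (n₀ + 1)
  have hmono : Polynomial.monomial q' (c * y ^ q') ∈ A := reesAlgebra.monomial_mem.mpr hq'2
  set aq : A := ⟨_, hmono⟩ with haqdef
  have haq : aq ∈ f n₀ := by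
    rw [hn₀ q' ((Nat.le_add_right n₀ 1).trans hq'1)]
    exact Ideal.subset_span ⟨q', le_rfl, hq'2, rfl⟩
  set SI : ℕ → Ideal D :=
    fun k => ∑ q ∈ Finset.range (n₀ + 1), I ^ (k - q) * Ideal.span {c * y ^ q} with hSI
  have mulSI : ∀ i j : ℕ, I ^ i * SI j ≤ SI (i + j) := by
    intro i j
    rw [hSI, Finset.mul_sum]
    apply sum_ideal_le
    intro q hq
    rw [← mul_assoc, ← pow_add]
    refine le_trans (Ideal.mul_mono
      (Ideal.pow_le_pow_right (m := i + j - q) (n := i + (j - q)) (by omega)) le_rfl) ?_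
    exact le_sum_ideal (f := fun q => I ^ (i + j - q) * Ideal.span {c * y ^ q}) hq
  have key : ∀ a ∈ f n₀, ∀ k, (a : D[X]).coeff k ∈ SI k := by
    intro a ha
    refine Submodule.span_induction ?_ ?_ ?_ ?_ ha
    · rintro a ⟨q, hq, hmem, hcoe⟩ k
      rw [hcoe, Polynomial.coeff_monomial]
      split_ifs with hqk
      · subst hqk
        have hx : c * y ^ q ∈ I ^ (q - q) * Ideal.span {c * y ^ q} := by
          rw [Nat.sub_self, pow_zero, one_mul]
          exact Ideal.subset_span rfl
        exact le_sum_ideal (f := fun q2 => I ^ (q - q2) * Ideal.span {c * y ^ q2})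
          (Finset.mem_range.mpr (by omega)) hx
      · exact Ideal.zero_mem _
    · intro k
      simp only [ZeroMemClass.coe_zero, Polynomial.coeff_zero]
      exact Ideal.zero_mem _
    · intro a b _ _ hA1 hB1 k
      rw [AddMemClass.coe_add, Polynomial.coeff_add]
      exact Ideal.add_mem _ (hA1 k) (hB1 k)
    · intro r a _ hA1 k
      rw [smul_eq_mul]
      show ((r * a : ↥A) : D[X]).coeff k ∈ SI k
      rw [MulMemClass.coe_mul, Polynomial.coeff_mul]
      apply Ideal.sum_mem
      rintro ⟨i, j⟩ hij
      have hij' : i + j = k := Finset.HasAntidiagonal.mem_antidiagonal.mp hij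
      have h1 : (r : D[X]).coeff i ∈ I ^ i := r.2 i
      exact hij' ▸ (mulSI i j (Ideal.mul_mem_mul h1 (hA1 j)))
  have hco : c * y ^ q' ∈ SI q' := by
    have hk := key aq haq q'
    rw [haqdef] at hk
    simpa [Polynomial.coeff_monomial] using hk
  have hfac : SI q' =
      Ideal.span {c} * ∑ q ∈ Finset.range (n₀ + 1), I ^ (q' - q) * Ideal.span {y ^ q} := by
    rw [hSI, Finset.mul_sum]
    apply Finset.sum_congr rfl
    intro q _
    rw [← Ideal.span_singleton_mul_span_singleton]
    ring
  rw [hfac] at hco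
  obtain ⟨z, hz, hcz⟩ := Ideal.mem_span_singleton_mul.mp hco
  have hzy : z = y ^ q' := mul_left_cancel₀ hc hcz
  subst hzy
  refine ⟨q', by omega, ?_⟩
  refine (sum_ideal_le ?_ : _ ≤ Gd I y q') hz
  intro q hq
  rw [Finset.mem_range] at hq
  have hyq : y ^ q = y ^ (q' - (q' - q)) := by congr 1; omega
  rw [hyq]
  exact le_sum_ideal (f := fun j => I ^ j * Ideal.span {y ^ (q' - j)})
    (Finset.mem_Icc.mpr ⟨by omega, by omega⟩)

lemma map_ideal_sum {R S : Type*} [CommRing R] [CommRing S] (φ : R →+* S) {ι : Type*}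
    (F : Finset ι) (g : ι → Ideal R) :
    Ideal.map φ (∑ i ∈ F, g i) = ∑ i ∈ F, Ideal.map φ (g i) := by
  classical
  induction F using Finset.induction with
  | empty => simpa using Ideal.map_bot
  | insert _ _ ha ih =>
    rw [Finset.sum_insert ha, Finset.sum_insert ha, Submodule.add_eq_sup,
      Submodule.add_eq_sup, Ideal.map_sup, ih]

lemma map_Gd {R S : Type*} [CommRing R] [CommRing S] (φ : R →+* S) (I : Ideal R)
    (y : R) (d : ℕ) :
    Ideal.map φ (Gd I y d) = Gd (I.map φ) (φ y) d := by
  rw [Gd, Gd, map_ideal_sum]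
  apply Finset.sum_congr rfl
  intro j _
  rw [Ideal.map_mul, Ideal.map_pow, Ideal.map_span, Set.image_singleton, map_pow]

lemma star {R : Type*} [CommRing R] [IsNoetherianRing R] [Nontrivial R]
    (I : Ideal R) (y c : R) (hc : ∀ P ∈ minimalPrimes R, c ∉ P)
    (h : ∀ n : ℕ, ∃ m, n ≤ m ∧ c * y ^ m ∈ I ^ m) :
    ∃ d, 1 ≤ d ∧ y ^ d ∈ Gd I y d := by
  classical
  have hfin : (minimalPrimes R).Finite := minimalPrimes.finite_of_isNoetherianRing R
  have hstep : ∀ P ∈ minimalPrimes R, ∃ d u, 1 ≤ d ∧ u ∈ Gd I y d ∧ y ^ d - u ∈ P := by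
    intro P hP
    haveI hPp : P.IsPrime := hP.1.1
    set φ := Ideal.Quotient.mk P with hφ
    have hcq : φ c ≠ 0 := fun h0 => hc P hP (Ideal.Quotient.eq_zero_iff_mem.mp h0)
    have h' : ∀ n : ℕ, ∃ m, n ≤ m ∧ φ c * φ y ^ m ∈ (I.map φ) ^ m := by
      intro n; obtain ⟨m, hm1, hm2⟩ := h n
      refine ⟨m, hm1, ?_⟩
      rw [← map_pow, ← map_mul, ← Ideal.map_pow]
      exact Ideal.mem_map_of_mem φ hm2
    obtain ⟨d, hd1, hd2⟩ := domstar (I.map φ) (φ y) (φ c) hcq h'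
    rw [← map_Gd] at hd2
    have hmm : φ (y ^ d) ∈ Ideal.map φ (Gd I y d) := by rw [map_pow]; exact hd2
    obtain ⟨u, hu, hu2⟩ :=
      (Ideal.mem_map_iff_of_surjective φ Ideal.Quotient.mk_surjective).mp hmm
    refine ⟨d, u, hd1, hu, ?_⟩
    rw [← Ideal.Quotient.mk_eq_mk_iff_sub_mem]
    exact hu2.symm
  choose! dP uP hdP huP hPmem using hstep
  set F := hfin.toFinset with hF
  set z := ∏ P ∈ F, (y ^ dP P - uP P) with hz
  have hShape : Shape I y z := by
    apply Finset.prod_induction _ _ (fun a b ha hb => ha.mul hb) (Shape.one I y)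
    intro P hPF
    have hPm : P ∈ minimalPrimes R := hfin.mem_toFinset.mp hPF
    exact ⟨dP P, uP P, huP P hPm, rfl⟩
  have hnil : z ∈ nilradical R := by
    rw [nilradical_eq_sInf]
    apply Submodule.mem_sInf.mpr
    intro P₀ hP₀
    haveI : Ideal.IsPrime P₀ := hP₀
    obtain ⟨Q, hQ, hQle⟩ := Ideal.exists_minimalPrimes_le (I := ⊥) (J := P₀) bot_le
    have hQm : Q ∈ minimalPrimes R := hQ
    obtain ⟨w, hw⟩ := Finset.dvd_prod_of_mem
      (fun P => y ^ dP P - uP P) (hfin.mem_toFinset.mpr hQm)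
    rw [hz, hw]
    exact hQle (Ideal.mul_mem_right _ _ (hPmem Q hQm))
  obtain ⟨m, hm⟩ := mem_nilradical.mp hnil
  obtain ⟨d, u, hu, hzu⟩ := hShape.pow m
  have hyd : y ^ d = u := by
    rw [hm] at hzu
    exact (sub_eq_zero.mp hzu.symm)
  have hdpos : 1 ≤ d := by
    rcases Nat.eq_zero_or_pos d with hd0 | hd1
    · exfalso
      subst hd0
      have : Gd I y 0 = ⊥ := by
        rw [Gd]
        rw [show Finset.Icc 1 0 = (∅ : Finset ℕ) from rfl]
        simp
      rw [this] at hu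
      have : u = 0 := hu
      rw [this] at hyd
      rw [pow_zero] at hyd
      exact one_ne_zero hyd
    · exact hd1
  exact ⟨d, hdpos, hyd ▸ hu⟩

end Stmt12Aux


lemma one_mem_RCirc (R : Type*) [CommRing R] : (1 : R) ∈ RCirc R :=
  fun P hP h1 => hP.1.1.ne_top ((Ideal.eq_top_iff_one P).mpr h1)

lemma mul_mem_RCirc {R : Type*} [CommRing R] {a b : R} (ha : a ∈ RCirc R)
    (hb : b ∈ RCirc R) : a * b ∈ RCirc R := by
  intro P hP hab
  rcases hP.1.1.mem_or_mem hab with h | h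
  exacts [ha P hP h, hb P hP h]

lemma prod_mem_RCirc {R : Type*} [CommRing R] {ι : Type*} (F : Finset ι) (f : ι → R)
    (hf : ∀ i ∈ F, f i ∈ RCirc R) : ∏ i ∈ F, f i ∈ RCirc R :=
  Finset.prod_induction f (· ∈ RCirc R) (fun _ _ => mul_mem_RCirc) (one_mem_RCirc R) hf

lemma frobPow_le_pow {R : Type*} [CommRing R] (I : Ideal R) (q : ℕ) : frobPow I q ≤ I ^ q := by
  rw [frobPow, Ideal.span_le]
  rintro x ⟨f, hf, rfl⟩
  exact Ideal.pow_mem_pow hf q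

lemma mem_mixedPow_of_frob {R : Type*} [CommRing R] {I : Ideal R} {s : ℝ} {q : ℕ} {x : R}
    (hx : x ∈ frobPow I q) : x ∈ mixedPow I s q := by
  rw [mixedPow, Submodule.add_eq_sup]
  exact Submodule.mem_sup_right hx

lemma mem_mixedPow_of_pow {R : Type*} [CommRing R] {I : Ideal R} {s : ℝ} {q : ℕ} {x : R}
    (hx : x ∈ I ^ ⌈s * (q : ℝ)⌉₊) : x ∈ mixedPow I s q := by
  rw [mixedPow, Submodule.add_eq_sup]
  exact Submodule.mem_sup_left hx

lemma mixedPow_le_pow {R : Type*} [CommRing R] (I : Ideal R) {t : ℝ} (ht : 1 ≤ t) (q : ℕ) :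
    mixedPow I t q ≤ I ^ q := by
  rw [mixedPow, Submodule.add_eq_sup]
  refine sup_le ?_ (frobPow_le_pow I q)
  refine Ideal.pow_le_pow_right ?_
  have h1 : (q : ℝ) ≤ t * q := by nlinarith [Nat.cast_nonneg (α := ℝ) q]
  have h2 : (q : ℝ) ≤ (⌈t * (q : ℝ)⌉₊ : ℝ) := le_trans h1 (Nat.le_ceil _)
  exact_mod_cast h2

/-- for `1 ≤ t < s`, the weak `s`-closure of the weak `t`-closure of `I`
equals the weak `t`-closure of `I` (the weak `t`-closure being realized as an ideal `J`). -/
theorem stmt12 {R : Type*} [CommRing R] [IsNoetherianRing R]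
    (p : ℕ) (hp : p.Prime) (hcp : CharP R p)
    (I : Ideal R) (t s : ℝ) (ht : 1 ≤ t) (hts : t < s)
    (J : Ideal R) (hJ : (J : Set R) = weakCl p I t) :
    weakCl p J s = (J : Set R) := by
  classical
  haveI := Fact.mk hp
  haveI : Nontrivial R := CharP.nontrivial_of_char_ne_one hp.ne_one
  have hst : 0 < s - t := by linarith
  apply Set.Subset.antisymm
  · -- hard direction : weakCl p J s ⊆ J
    intro x hx
    obtain ⟨c, hcR, N, hN⟩ := hx
    obtain ⟨T, hT⟩ := (IsNoetherian.noetherian J : J.FG)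
    have hTmem : ∀ y ∈ T, y ∈ weakCl p I t := by
      intro y hy
      rw [← hJ]
      exact hT ▸ Ideal.subset_span hy
    have hH : ∀ y : R, y ∈ T → ∃ cy, cy ∈ RCirc R ∧ ∃ Ny : ℕ, ∀ e, Ny ≤ e →
        cy * y ^ p ^ e ∈ mixedPow I t (p ^ e) := by
      intro y hy
      obtain ⟨cy, h1, Ny, h2⟩ := hTmem y hy
      exact ⟨cy, h1, Ny, h2⟩
    choose! cf hcf Nf hNf using hH
    set c₀ := ∏ y ∈ T, cf y with hc₀def
    have hc₀ : c₀ ∈ RCirc R := prod_mem_RCirc T cf (fun y hy => hcf y hy)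
    set N₀ := T.sup Nf with hN₀def
    have key1 : ∀ e, N₀ ≤ e → ∀ y ∈ T, c₀ * y ^ p ^ e ∈ mixedPow I t (p ^ e) := by
      intro e he y hy
      have h1 := hNf y hy e (le_trans (Finset.le_sup hy) he)
      have h2 : c₀ * y ^ p ^ e = (∏ z ∈ T.erase y, cf z) * (cf y * y ^ p ^ e) := by
        rw [hc₀def, ← Finset.mul_prod_erase T cf hy]
        ring
      rw [h2]
      exact Ideal.mul_mem_left _ _ h1
    have key2 : ∀ e, N₀ ≤ e → ∀ z ∈ frobPow J (p ^ e), c₀ * z ∈ mixedPow I t (p ^ e) := by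
      intro e he z hzmem
      have hfmem : ∀ f ∈ J, c₀ * f ^ p ^ e ∈ mixedPow I t (p ^ e) := by
        intro f hf
        rw [← hT] at hf
        induction hf using Submodule.span_induction with
        | mem g hg => exact key1 e he g hg
        | zero =>
            rw [zero_pow (pow_pos hp.pos e).ne', mul_zero]
            exact Ideal.zero_mem _
        | add a b ha hb hpa hpb =>
            rw [add_pow_char_pow, mul_add]
            exact Ideal.add_mem _ hpa hpb
        | smul r a ha hpa =>
            rw [smul_eq_mul, mul_pow, mul_left_comm]
            exact Ideal.mul_mem_left _ _ hpa
      rw [frobPow] at hzmem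
      induction hzmem using Submodule.span_induction with
      | mem g hg =>
          obtain ⟨f, hf, rfl⟩ := hg
          exact hfmem f hf
      | zero => rw [mul_zero]; exact Ideal.zero_mem _
      | add a b _ _ hpa hpb => rw [mul_add]; exact Ideal.add_mem _ hpa hpb
      | smul r a _ hpa =>
          rw [smul_eq_mul, mul_left_comm]
          exact Ideal.mul_mem_left _ _ hpa
    have key3 : ∀ y ∈ T, ∃ d, 1 ≤ d ∧ y ^ d ∈ Stmt12Aux.Gd I y d := by
      intro y hy
      apply Stmt12Aux.star I y (cf y) (hcf y hy)
      intro n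
      refine ⟨p ^ max (Nf y) n, ?_, ?_⟩
      · calc n ≤ max (Nf y) n := le_max_right _ _
          _ ≤ 2 ^ max (Nf y) n := Nat.lt_two_pow_self.le
          _ ≤ p ^ max (Nf y) n := Nat.pow_le_pow_left hp.two_le _
      · exact mixedPow_le_pow I ht (p ^ max (Nf y) n)
          (hNf y hy (max (Nf y) n) (le_max_left _ _))
    obtain ⟨D, hD⟩ := Stmt12Aux.multi I T key3
    have hIJ : I ≤ J := by
      intro w hw
      have hw2 : w ∈ weakCl p I t :=
        ⟨1, one_mem_RCirc R, 0, fun e _ => by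
          rw [one_mul]
          exact mem_mixedPow_of_frob (Ideal.subset_span ⟨w, hw, rfl⟩)⟩
      rw [← SetLike.mem_coe, hJ]
      exact hw2
    have hsupJ : I ⊔ Ideal.span (T : Set R) = J := by
      rw [← Ideal.submodule_span_eq, hT]
      exact sup_eq_right.mpr hIJ
    rw [hsupJ] at hD
    set N₁ := ⌈(D + 1 : ℝ) / (s - t)⌉₊ with hN₁def
    have hceil : ∀ e, N₁ ≤ e → ⌈t * ((p ^ e : ℕ) : ℝ)⌉₊ + D ≤ ⌈s * ((p ^ e : ℕ) : ℝ)⌉₊ := by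
      intro e he
      set q : ℕ := p ^ e with hqdef
      have hq0 : (0:ℝ) ≤ (q:ℝ) := Nat.cast_nonneg q
      have hq1 : (N₁ : ℝ) + 1 ≤ (q : ℝ) := by
        have h2 : e < 2 ^ e := Nat.lt_two_pow_self
        have h3 : (2:ℕ) ^ e ≤ p ^ e := Nat.pow_le_pow_left hp.two_le e
        have h4 : N₁ + 1 ≤ q := by omega
        exact_mod_cast h4
      have hDq : (D : ℝ) + 1 ≤ (s - t) * q := by
        have h4 : ((D : ℝ) + 1) / (s - t) ≤ (N₁ : ℝ) := Nat.le_ceil _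
        have h5 : ((D : ℝ) + 1) / (s - t) ≤ (q : ℝ) := le_trans h4 (by linarith)
        calc (D : ℝ) + 1 = ((D : ℝ) + 1) / (s - t) * (s - t) := by field_simp
          _ ≤ (q : ℝ) * (s - t) := mul_le_mul_of_nonneg_right h5 (le_of_lt hst)
          _ = (s - t) * q := by ring
      have htq : (⌈t * (q : ℝ)⌉₊ : ℝ) < t * q + 1 :=
        Nat.ceil_lt_add_one (mul_nonneg (by linarith) hq0)
      have hsq : s * (q : ℝ) ≤ (⌈s * (q : ℝ)⌉₊ : ℝ) := Nat.le_ceil _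
      have hkey : (⌈t * (q : ℝ)⌉₊ : ℝ) + D < (⌈s * (q : ℝ)⌉₊ : ℝ) + 1 := by
        have hx : t * q + (s - t) * q = s * q := by ring
        linarith
      have hkey2 : ⌈t * (q : ℝ)⌉₊ + D < ⌈s * (q : ℝ)⌉₊ + 1 := by exact_mod_cast hkey
      omega
    have hxmem : x ∈ weakCl p I t := by
      refine ⟨c₀ * c, mul_mem_RCirc hc₀ hcR, max (max N N₀) N₁, ?_⟩
      intro e he
      have heN : N ≤ e := le_trans (le_trans (le_max_left _ _) (le_max_left _ _)) he
      have heN₀ : N₀ ≤ e := le_trans (le_trans (le_max_right _ _) (le_max_left _ _)) he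
      have heN₁ : N₁ ≤ e := le_trans (le_max_right _ _) he
      have hmem := hN e heN
      rw [mixedPow, Submodule.add_eq_sup] at hmem
      obtain ⟨a, ha, b, hb, hab⟩ := Submodule.mem_sup.mp hmem
      have hca : c₀ * a ∈ mixedPow I t (p ^ e) := by
        have h7 := hceil e heN₁
        have hJle : J ^ ⌈s * ((p ^ e : ℕ) : ℝ)⌉₊ ≤ I ^ ⌈t * ((p ^ e : ℕ) : ℝ)⌉₊ := by
          calc J ^ ⌈s * ((p ^ e : ℕ) : ℝ)⌉₊ ≤ J ^ (D + ⌈t * ((p ^ e : ℕ) : ℝ)⌉₊) :=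
                Ideal.pow_le_pow_right (by omega)
            _ ≤ I ^ ⌈t * ((p ^ e : ℕ) : ℝ)⌉₊ := hD _
        exact mem_mixedPow_of_pow (hJle (Ideal.mul_mem_left _ _ ha))
      have hcb : c₀ * b ∈ mixedPow I t (p ^ e) := key2 e heN₀ b hb
      have heq : (c₀ * c) * x ^ p ^ e = c₀ * a + c₀ * b := by
        rw [mul_assoc, ← hab, mul_add]
      rw [heq]
      exact Ideal.add_mem _ hca hcb
    rw [hJ]
    exact hxmem
  · -- easy direction : J ⊆ weakCl p J s
    intro x hx
    exact ⟨1, one_mem_RCirc R, 0, fun e _ => by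
      rw [one_mul]
      exact mem_mixedPow_of_frob (Ideal.subset_span ⟨x, hx, rfl⟩)⟩
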